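/- Let {Z_t} be a stationary reversible finite Markov chain on {1,...,n} and f: {1,...,n} → ℝ. Then for every t > 0, E[max_{0 ≤ s ≤ t} (f(Z_s) - f(Z_0))²] ≤ 100 t E[(f(Z_1) - f(Z_0))²]. -/
import Mathlib
open Finset

namespace MCMI

variable {n : ℕ}

/-- Extend a finite path to all of `ℕ` by truncation. -/
def pad {m : ℕ} (z : Fin (m+1) → Fin n) (u : ℕ) : Fin n :=
  z ⟨min u m, Nat.lt_succ_of_le (min_le_right u m)⟩

lemma pad_snoc {m : ℕ} (y : Fin (m+1) → Fin n) (k : Fin n) {u : ℕ} (hu : u ≤ m) :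
    pad (Fin.snoc y k) u = pad y u := by
  have h : (⟨min u (m+1), Nat.lt_succ_of_le (min_le_right u (m+1))⟩ : Fin (m+2))
      = Fin.castSucc ⟨min u m, Nat.lt_succ_of_le (min_le_right u m)⟩ := by
    ext; simp; omega
  simp only [pad]
  rw [h, Fin.snoc_castSucc]

lemma pad_snoc_top {m : ℕ} (y : Fin (m+1) → Fin n) (k : Fin n) {u : ℕ} (hu : m+1 ≤ u) :
    pad (Fin.snoc y k) u = k := by
  have h : (⟨min u (m+1), Nat.lt_succ_of_le (min_le_right u (m+1))⟩ : Fin (m+2))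
      = Fin.last (m+1) := by
    ext; simp [Fin.last]; omega
  simp only [pad]
  rw [h, Fin.snoc_last]

lemma sum_snoc {m : ℕ} (F : (Fin (m+2) → Fin n) → ℝ) :
    ∑ z : Fin (m+2) → Fin n, F z
      = ∑ y : Fin (m+1) → Fin n, ∑ k : Fin n, F (Fin.snoc y k) := by
  rw [← (Fin.snocEquiv (fun _ : Fin (m+2) => Fin n)).sum_comp F, Fintype.sum_prod_type]
  rw [Finset.sum_comm]
  rfl


variable (π : Fin n → ℝ) (A : Matrix (Fin n) (Fin n) ℝ)

noncomputable def W {m : ℕ} (z : Fin (m+1) → Fin n) : ℝ :=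
  π (pad z 0) * ∏ u ∈ Finset.range m, A (pad z u) (pad z (u+1))

noncomputable def Ex (m : ℕ) (h : (ℕ → Fin n) → ℝ) : ℝ :=
  ∑ z : Fin (m+1) → Fin n, W π A z * h (pad z)

lemma W_nonneg (hπ0 : ∀ i, 0 ≤ π i) (hA0 : ∀ i j, 0 ≤ A i j) {m : ℕ}
    (z : Fin (m+1) → Fin n) : 0 ≤ W π A z :=
  mul_nonneg (hπ0 _) (Finset.prod_nonneg fun _ _ => hA0 _ _)

lemma W_snoc {m : ℕ} (y : Fin (m+1) → Fin n) (k : Fin n) :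
    W π A (Fin.snoc y k) = W π A y * A (pad y m) k := by
  unfold W
  rw [Finset.prod_range_succ, pad_snoc y k (Nat.zero_le m),
    pad_snoc y k (le_refl m), pad_snoc_top y k (le_refl (m+1))]
  rw [Finset.prod_congr rfl (fun u hu => ?_), mul_assoc]
  rw [mem_range] at hu
  rw [pad_snoc y k (by omega), pad_snoc y k (by omega)]

lemma Ex_succ (m : ℕ) (h : (ℕ → Fin n) → ℝ) :
    Ex π A (m+1) h = ∑ y : Fin (m+1) → Fin n, W π A y *
      ∑ k, A (pad y m) k * h (pad (Fin.snoc y k)) := by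
  rw [Ex, sum_snoc]
  refine Finset.sum_congr rfl fun y _ => ?_
  rw [Finset.mul_sum]
  refine Finset.sum_congr rfl fun k _ => ?_
  rw [W_snoc]; ring

lemma Ex_mono (hπ0 : ∀ i, 0 ≤ π i) (hA0 : ∀ i j, 0 ≤ A i j) (m : ℕ)
    {h1 h2 : (ℕ → Fin n) → ℝ} (hle : ∀ w, h1 w ≤ h2 w) :
    Ex π A m h1 ≤ Ex π A m h2 :=
  Finset.sum_le_sum fun z _ =>
    mul_le_mul_of_nonneg_left (hle _) (W_nonneg π A hπ0 hA0 z)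

lemma Ex_add (m : ℕ) (h1 h2 : (ℕ → Fin n) → ℝ) :
    Ex π A m (fun w => h1 w + h2 w) = Ex π A m h1 + Ex π A m h2 := by
  simp [Ex, mul_add, Finset.sum_add_distrib]

lemma Ex_smul (m : ℕ) (c : ℝ) (h : (ℕ → Fin n) → ℝ) :
    Ex π A m (fun w => c * h w) = c * Ex π A m h := by
  simp [Ex, Finset.mul_sum]; refine Finset.sum_congr rfl fun z _ => by ring

lemma Ex_sum (m r : ℕ) (h : ℕ → (ℕ → Fin n) → ℝ) :
    Ex π A m (fun w => ∑ u ∈ Finset.range r, h u w)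
      = ∑ u ∈ Finset.range r, Ex π A m (h u) := by
  simp only [Ex, Finset.mul_sum]
  rw [Finset.sum_comm]

lemma Ex_nonneg (hπ0 : ∀ i, 0 ≤ π i) (hA0 : ∀ i j, 0 ≤ A i j) (m : ℕ)
    {h : (ℕ → Fin n) → ℝ} (hh : ∀ w, 0 ≤ h w) : 0 ≤ Ex π A m h :=
  Finset.sum_nonneg fun z _ => mul_nonneg (W_nonneg π A hπ0 hA0 z) (hh _)

/-- Reduce the time horizon for functionals depending only on coordinates `≤ r`. -/
lemma Ex_dep (hA1 : ∀ i, ∑ j, A i j = 1) (h : (ℕ → Fin n) → ℝ) (r : ℕ)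
    (hd : ∀ w w' : ℕ → Fin n, (∀ u, u ≤ r → w u = w' u) → h w = h w') :
    ∀ m, r ≤ m → Ex π A m h = Ex π A r h := by
  intro m hm
  induction m, hm using Nat.le_induction with
  | base => rfl
  | succ m hm ih =>
    rw [← ih, Ex_succ]
    refine Finset.sum_congr rfl fun y _ => ?_
    have hkey : ∀ k, h (pad (Fin.snoc y k)) = h (pad y) := fun k =>
      hd _ _ fun u hu => pad_snoc y k (le_trans hu hm)
    simp only [hkey]
    rw [← Finset.sum_mul, hA1]
    ring

/-- Marginal law at the final time. -/
lemma Ex_last (hA1 : ∀ i, ∑ j, A i j = 1) (hstat : ∀ j, ∑ i, π i * A i j = π j) :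
    ∀ (m : ℕ) (ψ : Fin n → ℝ), Ex π A m (fun w => ψ (w m)) = ∑ i, π i * ψ i := by
  intro m
  induction m with
  | zero =>
    intro ψ
    rw [Ex, ← (Equiv.funUnique (Fin 1) (Fin n)).symm.sum_comp]
    refine Finset.sum_congr rfl fun i _ => ?_
    simp [W, pad]
  | succ m ih =>
    intro ψ
    rw [Ex_succ]
    have h1 : ∀ (y : Fin (m+1) → Fin n) k, pad (Fin.snoc y k) (m+1) = k := fun y k =>
      pad_snoc_top y k (le_refl _)
    simp only [h1]
    have step : (∑ y : Fin (m+1) → Fin n, W π A y * ∑ k, A (pad y m) k * ψ k)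
        = Ex π A m (fun w => ∑ k, A (w m) k * ψ k) := by
      rw [Ex]
    rw [step, ih (fun i => ∑ k, A i k * ψ k)]
    calc ∑ i, π i * ∑ k, A i k * ψ k = ∑ i, ∑ k, π i * A i k * ψ k := by
          refine Finset.sum_congr rfl fun i _ => ?_
          rw [Finset.mul_sum]; exact Finset.sum_congr rfl fun k _ => by ring
      _ = ∑ k, (∑ i, π i * A i k) * ψ k := by
          rw [Finset.sum_comm]
          exact Finset.sum_congr rfl fun k _ => (Finset.sum_mul ..).symm
      _ = ∑ k, π k * ψ k := by simp only [hstat]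


variable (f : Fin n → ℝ)

noncomputable def gg (i : Fin n) : ℝ := (∑ k, A i k * f k) - f i

noncomputable def MM (w : ℕ → Fin n) (s : ℕ) : ℝ :=
  f (w s) - f (w 0) - ∑ u ∈ Finset.range s, gg A f (w u)

noncomputable def xb (w : ℕ → Fin n) : ℕ → ℝ
  | 0 => |MM A f w 0|
  | (s+1) => max (xb w s) |MM A f w (s+1)|

lemma MM_zero (w : ℕ → Fin n) : MM A f w 0 = 0 := by simp [MM]

lemma xb_nonneg (w : ℕ → Fin n) (s : ℕ) : 0 ≤ xb A f w s := by
  induction s with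
  | zero => exact abs_nonneg _
  | succ s ih => exact le_trans ih (le_max_left _ _)

lemma abs_MM_le_xb (w : ℕ → Fin n) {u s : ℕ} (h : u ≤ s) : |MM A f w u| ≤ xb A f w s := by
  induction s with
  | zero => simp_all [xb]
  | succ s ih =>
    rcases Nat.lt_or_ge u (s+1) with h'|h'
    · exact le_trans (ih (by omega)) (le_max_left _ _)
    · have : u = s+1 := by omega
      subst this; exact le_max_right _ _

lemma MM_sq_le_xb_sq (w : ℕ → Fin n) {u s : ℕ} (h : u ≤ s) :
    (MM A f w u)^2 ≤ (xb A f w s)^2 := by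
  rw [← sq_abs (MM A f w u)]
  exact pow_le_pow_left₀ (abs_nonneg _) (abs_MM_le_xb A f w h) 2

lemma dep_MM {s : ℕ} {w w' : ℕ → Fin n} (hag : ∀ u, u ≤ s → w u = w' u) :
    MM A f w s = MM A f w' s := by
  unfold MM
  rw [hag s (le_refl s), hag 0 (Nat.zero_le s)]
  congr 1
  refine Finset.sum_congr rfl fun u hu => ?_
  rw [mem_range] at hu
  rw [hag u (by omega)]

lemma dep_xb {s : ℕ} {w w' : ℕ → Fin n} (hag : ∀ u, u ≤ s → w u = w' u) :
    xb A f w s = xb A f w' s := by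
  induction s with
  | zero => simp only [xb]; rw [dep_MM A f hag]
  | succ s ih =>
    simp only [xb]
    rw [dep_MM A f hag, ih (fun u hu => hag u (by omega))]

lemma MM_pad_snoc {m : ℕ} (y : Fin (m+1) → Fin n) (k : Fin n) :
    MM A f (pad (Fin.snoc y k)) (m+1)
      = MM A f (pad y) m + (f k - ∑ j, A (pad y m) j * f j) := by
  unfold MM
  have hs : ∑ u ∈ Finset.range (m+1), gg A f (pad (Fin.snoc y k) u)
      = ∑ u ∈ Finset.range (m+1), gg A f (pad y u) := by
    refine Finset.sum_congr rfl fun u hu => ?_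
    rw [mem_range] at hu
    rw [pad_snoc y k (by omega)]
  rw [hs, Finset.sum_range_succ, pad_snoc_top y k (le_refl _), pad_snoc y k (Nat.zero_le m)]
  unfold gg; ring

/-- Centering identity: `∑ⱼ Aᵢⱼ (vⱼ - c)² = ∑ⱼ Aᵢⱼ vⱼ² - c²` where `c = ∑ⱼ Aᵢⱼ vⱼ`. -/
lemma center_sum (hA1 : ∀ i, ∑ j, A i j = 1) (i : Fin n) (v : Fin n → ℝ) :
    ∑ j, A i j * (v j - ∑ k, A i k * v k)^2
      = (∑ j, A i j * (v j)^2) - (∑ k, A i k * v k)^2 := by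
  set c := ∑ k, A i k * v k with hc
  calc ∑ j, A i j * (v j - c)^2
      = ∑ j, (A i j * (v j)^2 - 2*c*(A i j * v j) + c^2 * A i j) :=
        Finset.sum_congr rfl fun j _ => by ring
    _ = (∑ j, A i j * (v j)^2) - 2*c*(∑ j, A i j * v j) + c^2 * (∑ j, A i j) := by
        rw [Finset.sum_add_distrib, Finset.sum_sub_distrib, ← Finset.mul_sum, ← Finset.mul_sum]
    _ = _ := by rw [hA1 i, ← hc]; ring

lemma jensen_sq (hA0 : ∀ i j, 0 ≤ A i j) (hA1 : ∀ i, ∑ j, A i j = 1) (i : Fin n)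
    (v : Fin n → ℝ) : (∑ k, A i k * v k)^2 ≤ ∑ j, A i j * (v j)^2 := by
  have h := center_sum A hA1 i v
  have h0 : 0 ≤ ∑ j, A i j * (v j - ∑ k, A i k * v k)^2 :=
    Finset.sum_nonneg fun j _ => mul_nonneg (hA0 i j) (sq_nonneg _)
  linarith

/-- One-step conditional second moment bound. -/
lemma cond_var_le (hA0 : ∀ i j, 0 ≤ A i j) (hA1 : ∀ i, ∑ j, A i j = 1) (i : Fin n) :
    ∑ k, A i k * (f k - ∑ j, A i j * f j)^2 ≤ ∑ k, A i k * (f k - f i)^2 := by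
  have key : ∑ k, A i k * (f k - f i) = (∑ j, A i j * f j) - f i := by
    rw [show (∑ k, A i k * (f k - f i)) = (∑ k, A i k * f k) - (∑ k, A i k * f i) by
      rw [← Finset.sum_sub_distrib]; exact Finset.sum_congr rfl fun k _ => by ring]
    rw [← Finset.sum_mul, hA1, one_mul]
  have h := center_sum A hA1 i (fun k => f k - f i)
  rw [key] at h
  have h2 : ∀ k, f k - f i - ((∑ j, A i j * f j) - f i) = f k - ∑ j, A i j * f j :=
    fun k => by ring
  simp only [h2] at h
  nlinarith [sq_nonneg ((∑ j, A i j * f j) - f i)]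

noncomputable def E1 : ℝ := ∑ i, ∑ j, π i * A i j * (f j - f i)^2

lemma E1_nonneg (hπ0 : ∀ i, 0 ≤ π i) (hA0 : ∀ i j, 0 ≤ A i j) : 0 ≤ E1 π A f :=
  Finset.sum_nonneg fun i _ => Finset.sum_nonneg fun j _ =>
    mul_nonneg (mul_nonneg (hπ0 i) (hA0 i j)) (sq_nonneg _)

/-- Stationary expectation of a one-coordinate functional, bounded via `E1`. -/
lemma Ex_gg_sq_le (hπ0 : ∀ i, 0 ≤ π i) (hA0 : ∀ i j, 0 ≤ A i j)
    (hA1 : ∀ i, ∑ j, A i j = 1) (hstat : ∀ j, ∑ i, π i * A i j = π j)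
    {u m : ℕ} (hu : u ≤ m) :
    Ex π A m (fun w => (gg A f (w u))^2) ≤ E1 π A f := by
  have hd : ∀ w w' : ℕ → Fin n, (∀ v, v ≤ u → w v = w' v) →
      (gg A f (w u))^2 = (gg A f (w' u))^2 := fun w w' hag => by rw [hag u (le_refl u)]
  rw [Ex_dep π A hA1 _ u hd m hu, Ex_last π A hA1 hstat u (fun i => (gg A f i)^2)]
  unfold E1
  refine Finset.sum_le_sum fun i _ => ?_
  have key : gg A f i = ∑ k, A i k * (f k - f i) := by
    unfold gg
    rw [show (∑ k, A i k * (f k - f i)) = (∑ k, A i k * f k) - (∑ k, A i k * f i) by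
      rw [← Finset.sum_sub_distrib]; exact Finset.sum_congr rfl fun k _ => by ring]
    rw [← Finset.sum_mul, hA1, one_mul]
  rw [key]
  calc π i * (∑ k, A i k * (f k - f i))^2
      ≤ π i * ∑ k, A i k * (f k - f i)^2 :=
        mul_le_mul_of_nonneg_left (jensen_sq A hA0 hA1 i _) (hπ0 i)
    _ = ∑ j, π i * A i j * (f j - f i)^2 := by
        rw [Finset.mul_sum]
        exact Finset.sum_congr rfl fun j _ => by ring


/-- Second moment of the forward martingale grows linearly. -/
lemma EM_sq (hπ0 : ∀ i, 0 ≤ π i) (hA0 : ∀ i j, 0 ≤ A i j)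
    (hA1 : ∀ i, ∑ j, A i j = 1) (hstat : ∀ j, ∑ i, π i * A i j = π j) :
    ∀ m : ℕ, Ex π A m (fun w => (MM A f w m)^2) ≤ m * E1 π A f := by
  intro m
  induction m with
  | zero =>
    simp only [MM_zero, Nat.cast_zero, zero_mul]
    simp [Ex]
  | succ m ih =>
    rw [Ex_succ]
    have key : ∀ y : Fin (m+1) → Fin n,
        (∑ k, A (pad y m) k * (MM A f (pad (Fin.snoc y k)) (m+1))^2)
          = (MM A f (pad y) m)^2
            + ∑ k, A (pad y m) k * (f k - ∑ j, A (pad y m) j * f j)^2 := by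
      intro y
      simp only [MM_pad_snoc]
      set i := pad y m
      set a := MM A f (pad y) m
      set c := ∑ j, A i j * f j with hc
      have expand : ∀ k, A i k * (a + (f k - c))^2
          = a^2 * A i k + 2*a*(A i k * f k - A i k * c) + A i k * (f k - c)^2 :=
        fun k => by ring
      simp only [expand]
      rw [Finset.sum_add_distrib, Finset.sum_add_distrib, ← Finset.mul_sum, hA1,
        ← Finset.mul_sum, Finset.sum_sub_distrib, ← Finset.sum_mul, hA1, ← hc]
      ring
    have step : (∑ y : Fin (m+1) → Fin n, W π A y *
          ∑ k, A (pad y m) k * (MM A f (pad (Fin.snoc y k)) (m+1))^2)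
        = Ex π A m (fun w => (MM A f w m)^2)
          + Ex π A m (fun w => ∑ k, A (w m) k * (f k - ∑ j, A (w m) j * f j)^2) := by
      rw [← Ex_add, Ex]
      refine Finset.sum_congr rfl fun y _ => ?_
      rw [key y]
    rw [step]
    have h2 : Ex π A m (fun w => ∑ k, A (w m) k * (f k - ∑ j, A (w m) j * f j)^2)
        ≤ E1 π A f := by
      rw [Ex_last π A hA1 hstat m
        (fun i => ∑ k, A i k * (f k - ∑ j, A i j * f j)^2)]
      unfold E1
      refine Finset.sum_le_sum fun i _ => ?_
      calc π i * ∑ k, A i k * (f k - ∑ j, A i j * f j)^2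
          ≤ π i * ∑ k, A i k * (f k - f i)^2 :=
            mul_le_mul_of_nonneg_left (cond_var_le A f hA0 hA1 i) (hπ0 i)
        _ = ∑ j, π i * A i j * (f j - f i)^2 := by
            rw [Finset.mul_sum]
            exact Finset.sum_congr rfl fun j _ => by ring
    push_cast
    linarith

/-- Submartingale step for `|M|`. -/
lemma sub_step (hπ0 : ∀ i, 0 ≤ π i) (hA0 : ∀ i j, 0 ≤ A i j)
    (hA1 : ∀ i, ∑ j, A i j = 1) (s : ℕ) :
    0 ≤ Ex π A (s+1) (fun w => xb A f w s * (|MM A f w (s+1)| - |MM A f w s|)) := by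
  rw [Ex_succ]
  refine Finset.sum_nonneg fun y _ => mul_nonneg (W_nonneg π A hπ0 hA0 y) ?_
  set i := pad y s with hi
  set a := MM A f (pad y) s with ha
  set c := ∑ j, A i j * f j with hc
  have hagree : ∀ k : Fin n, ∀ u, u ≤ s → pad (Fin.snoc y k) u = pad y u :=
    fun k u hu => pad_snoc y k hu
  have hxb : ∀ k, xb A f (pad (Fin.snoc y k)) s = xb A f (pad y) s :=
    fun k => dep_xb A f (hagree k)
  have hMs : ∀ k, MM A f (pad (Fin.snoc y k)) s = a :=
    fun k => dep_MM A f (hagree k)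
  have hM1 : ∀ k, MM A f (pad (Fin.snoc y k)) (s+1) = a + (f k - c) :=
    fun k => MM_pad_snoc A f y k
  simp only [hxb, hMs, hM1]
  have split : ∀ k, A i k * (xb A f (pad y) s * (|a + (f k - c)| - |a|))
      = xb A f (pad y) s * (A i k * |a + (f k - c)| - A i k * |a|) := fun k => by ring
  simp only [split]
  rw [← Finset.mul_sum]
  refine mul_nonneg (xb_nonneg A f _ _) ?_
  rw [Finset.sum_sub_distrib, ← Finset.sum_mul, hA1, one_mul, sub_nonneg]
  have habs : |a| = |∑ k, A i k * (a + (f k - c))| := by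
    congr 1
    have : ∀ k, A i k * (a + (f k - c)) = a * A i k + (A i k * f k - A i k * c) :=
      fun k => by ring
    simp only [this]
    rw [Finset.sum_add_distrib, ← Finset.mul_sum, hA1, Finset.sum_sub_distrib,
      ← Finset.sum_mul, hA1, ← hc]
    ring
  rw [habs]
  calc |∑ k, A i k * (a + (f k - c))| ≤ ∑ k, |A i k * (a + (f k - c))| :=
        Finset.abs_sum_le_sum_abs _ _
    _ = ∑ k, A i k * |a + (f k - c)| := Finset.sum_congr rfl fun k _ => by
        rw [abs_mul, abs_of_nonneg (hA0 i k)]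

/-- Pathwise running-max invariant. -/
lemma R_path (w : ℕ → Fin n) : ∀ m : ℕ,
    ∑ s ∈ Finset.range m, xb A f w s * (|MM A f w (s+1)| - |MM A f w s|)
      ≤ xb A f w m * |MM A f w m| - (xb A f w m)^2/2 := by
  intro m
  induction m with
  | zero =>
    simp only [Finset.range_zero, Finset.sum_empty]
    have : xb A f w 0 = |MM A f w 0| := rfl
    rw [this]
    nlinarith [sq_nonneg (|MM A f w 0|)]
  | succ m ih =>
    rw [Finset.sum_range_succ]
    have hxs : xb A f w (m+1) = max (xb A f w m) |MM A f w (m+1)| := rfl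
    rcases le_total (|MM A f w (m+1)|) (xb A f w m) with h|h
    · rw [hxs, max_eq_left h]
      nlinarith
    · rw [hxs, max_eq_right h]
      have hb := xb_nonneg A f w m
      nlinarith [sq_nonneg (|MM A f w (m+1)| - xb A f w m)]

/-- Pathwise Doob inequality. -/
lemma doob_path (w : ℕ → Fin n) (m : ℕ) :
    (xb A f w m)^2 ≤ 4*(MM A f w m)^2
      - 4*∑ s ∈ Finset.range m, xb A f w s * (|MM A f w (s+1)| - |MM A f w s|) := by
  have h := R_path A f w m
  have hamgm : xb A f w m * |MM A f w m| ≤ (xb A f w m)^2/4 + |MM A f w m|^2 := by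
    nlinarith [sq_nonneg (xb A f w m / 2 - |MM A f w m|)]
  have : |MM A f w m|^2 = (MM A f w m)^2 := sq_abs _
  nlinarith

/-- Doob `L²` maximal inequality. -/
lemma doob (hπ0 : ∀ i, 0 ≤ π i) (hA0 : ∀ i j, 0 ≤ A i j)
    (hA1 : ∀ i, ∑ j, A i j = 1) (m : ℕ) :
    Ex π A m (fun w => (xb A f w m)^2)
      ≤ 4 * Ex π A m (fun w => (MM A f w m)^2) := by
  have h1 : Ex π A m (fun w => (xb A f w m)^2)
      ≤ Ex π A m (fun w => 4*(MM A f w m)^2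
        - 4*∑ s ∈ Finset.range m, xb A f w s * (|MM A f w (s+1)| - |MM A f w s|)) :=
    Ex_mono π A hπ0 hA0 m fun w => doob_path A f w m
  have h2 : Ex π A m (fun w => 4*(MM A f w m)^2
        - 4*∑ s ∈ Finset.range m, xb A f w s * (|MM A f w (s+1)| - |MM A f w s|))
      = 4 * Ex π A m (fun w => (MM A f w m)^2)
        - 4 * ∑ s ∈ Finset.range m,
            Ex π A m (fun w => xb A f w s * (|MM A f w (s+1)| - |MM A f w s|)) := by
    have := Ex_add π A m (fun w => 4*(MM A f w m)^2)
      (fun w => -(4*∑ s ∈ Finset.range m,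
        xb A f w s * (|MM A f w (s+1)| - |MM A f w s|)))
    simp only [← sub_eq_add_neg] at this
    rw [this, Ex_smul]
    have hneg : Ex π A m (fun w => -(4*∑ s ∈ Finset.range m,
          xb A f w s * (|MM A f w (s+1)| - |MM A f w s|)))
        = -(4 * ∑ s ∈ Finset.range m,
            Ex π A m (fun w => xb A f w s * (|MM A f w (s+1)| - |MM A f w s|))) := by
      rw [show ∀ h : (ℕ → Fin n) → ℝ, (fun w => -(4 * h w)) = (fun w => (-4) * h w) from
        fun h => funext fun w => by ring]
      rw [Ex_smul, Ex_sum]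
      ring
    rw [hneg]
    ring
  have h3 : ∀ s ∈ Finset.range m,
      0 ≤ Ex π A m (fun w => xb A f w s * (|MM A f w (s+1)| - |MM A f w s|)) := by
    intro s hs
    rw [mem_range] at hs
    have hd : ∀ w w' : ℕ → Fin n, (∀ u, u ≤ s+1 → w u = w' u) →
        xb A f w s * (|MM A f w (s+1)| - |MM A f w s|)
          = xb A f w' s * (|MM A f w' (s+1)| - |MM A f w' s|) := by
      intro w w' hag
      rw [dep_xb A f (fun u hu => hag u (by omega)),
        dep_MM A f (s := s+1) (fun u hu => hag u (by omega)),
        dep_MM A f (s := s) (fun u hu => hag u (by omega))]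
    rw [Ex_dep π A hA1 _ (s+1) hd m (by omega)]
    exact sub_step π A f hπ0 hA0 hA1 s
  have h4 : 0 ≤ ∑ s ∈ Finset.range m,
      Ex π A m (fun w => xb A f w s * (|MM A f w (s+1)| - |MM A f w s|)) :=
    Finset.sum_nonneg h3
  linarith


/-- Reversibility propagates along a path. -/
lemma rev_weight (hrev : ∀ i j, π i * A i j = π j * A j i) (w : ℕ → Fin n) :
    ∀ m : ℕ, π (w 0) * ∏ u ∈ Finset.range m, A (w u) (w (u+1))
      = π (w m) * ∏ u ∈ Finset.range m, A (w (u+1)) (w u) := by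
  intro m
  induction m with
  | zero => simp
  | succ m ih =>
    rw [Finset.prod_range_succ, Finset.prod_range_succ, ← mul_assoc, ih]
    have := hrev (w m) (w (m+1))
    calc π (w m) * (∏ u ∈ Finset.range m, A (w (u+1)) (w u)) * A (w m) (w (m+1))
        = (π (w m) * A (w m) (w (m+1))) * ∏ u ∈ Finset.range m, A (w (u+1)) (w u) := by
          ring
      _ = (π (w (m+1)) * A (w (m+1)) (w m)) * ∏ u ∈ Finset.range m, A (w (u+1)) (w u) := by
          rw [this]
      _ = _ := by ring

lemma pad_rev {m : ℕ} (z : Fin (m+1) → Fin n) (v : ℕ) :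
    pad (fun u => z u.rev) v = pad z (m - v) := by
  unfold pad
  apply congrArg z
  ext
  simp [Fin.val_rev]
  omega

lemma W_rev (hrev : ∀ i j, π i * A i j = π j * A j i) {m : ℕ} (z : Fin (m+1) → Fin n) :
    W π A (fun u => z u.rev) = W π A z := by
  unfold W
  simp only [pad_rev]
  rw [Nat.sub_zero]
  have h1 : ∀ u, m - (u + 1) = m - 1 - u := fun u => by omega
  have h2 : ∏ u ∈ Finset.range m, A (pad z (m - u)) (pad z (m - (u+1)))
      = ∏ u ∈ Finset.range m, A (pad z (u+1)) (pad z u) := by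
    rw [← Finset.prod_range_reflect (fun u => A (pad z (u+1)) (pad z u)) m]
    refine Finset.prod_congr rfl fun u hu => ?_
    rw [mem_range] at hu
    have : m - 1 - u + 1 = m - u := by omega
    rw [h1 u, this]
  rw [h2, ← rev_weight π A hrev (fun u => pad z u) m]

lemma Ex_rev (hrev : ∀ i j, π i * A i j = π j * A j i) (m : ℕ) (h : (ℕ → Fin n) → ℝ) :
    Ex π A m (fun w => h (fun u => w (m - u))) = Ex π A m h := by
  have hinv : Function.Involutive
      (fun (z : Fin (m+1) → Fin n) => (fun u => z u.rev)) := by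
    intro z; funext u; simp [Fin.rev_rev]
  rw [Ex, Ex]
  refine Fintype.sum_equiv hinv.toPerm _ _ fun z => ?_
  have hp : (fun u => pad z (m - u)) = pad (fun u => z u.rev) := by
    funext v; rw [pad_rev]
  show W π A z * h (fun u => pad z (m - u))
      = W π A (fun u => z u.rev) * h (pad (fun u => z u.rev))
  rw [W_rev π A hrev, hp]


/-- Forward/backward martingale decomposition identity. -/
lemma decomp (w : ℕ → Fin n) (t : ℕ) {s : ℕ} (hs : s ≤ t) :
    MM A f w s - MM A f (fun v => w (t - v)) t + MM A f (fun v => w (t - v)) (t - s)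
      - gg A f (w s) + gg A f (w 0) = 2*(f (w s) - f (w 0)) := by
  have hts : t - (t - s) = s := by omega
  have hNt : MM A f (fun v => w (t-v)) t
      = f (w 0) - f (w t) - ∑ v ∈ Finset.range t, gg A f (w (t - v)) := by
    simp only [MM, Nat.sub_self, Nat.sub_zero]
  have hNts : MM A f (fun v => w (t-v)) (t-s)
      = f (w s) - f (w t) - ∑ v ∈ Finset.range (t-s), gg A f (w (t - v)) := by
    simp only [MM, hts, Nat.sub_zero]
  have hIco : ∑ v ∈ Finset.Ico (t-s) t, gg A f (w (t - v))
      = ∑ u ∈ Finset.range s, gg A f (w (u+1)) := by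
    rw [Finset.sum_Ico_eq_sum_range, hts,
      ← Finset.sum_range_reflect (fun u => gg A f (w (u+1))) s]
    refine Finset.sum_congr rfl fun u hu => ?_
    rw [mem_range] at hu
    congr 2
    omega
  have hsplit : ∑ v ∈ Finset.range t, gg A f (w (t - v))
      = (∑ v ∈ Finset.range (t-s), gg A f (w (t - v)))
        + ∑ u ∈ Finset.range s, gg A f (w (u+1)) := by
    rw [Finset.range_eq_Ico,
      ← Finset.sum_Ico_consecutive _ (Nat.zero_le (t-s)) (Nat.sub_le t s),
      hIco, ← Finset.range_eq_Ico]
  have htel : (∑ u ∈ Finset.range s, gg A f (w (u+1)))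
      - ∑ u ∈ Finset.range s, gg A f (w u) = gg A f (w s) - gg A f (w 0) := by
    rw [← Finset.sum_sub_distrib]
    exact Finset.sum_range_sub (fun u => gg A f (w u)) s
  rw [hNt, hNts]
  unfold MM
  linarith [hsplit, htel]

/-- Pathwise bound for one time point. -/
lemma path_sq_bound (w : ℕ → Fin n) (t : ℕ) {s : ℕ} (hs : s ≤ t) :
    (f (w s) - f (w 0))^2 ≤ (5/4) * ((MM A f w s)^2
      + (MM A f (fun v => w (t - v)) t)^2 + (MM A f (fun v => w (t - v)) (t - s))^2
      + (gg A f (w s))^2 + (gg A f (w 0))^2) := by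
  have h := decomp A f w t hs
  set a := MM A f w s
  set b := MM A f (fun v => w (t - v)) t
  set c := MM A f (fun v => w (t - v)) (t - s)
  set d := gg A f (w s)
  set e := gg A f (w 0)
  have h5 : (a - b + c - d + e)^2 ≤ 5*(a^2+b^2+c^2+d^2+e^2) := by
    nlinarith [sq_nonneg (a+b), sq_nonneg (a-c), sq_nonneg (a+d), sq_nonneg (a-e),
      sq_nonneg (b+c), sq_nonneg (b-d), sq_nonneg (b+e), sq_nonneg (c+d),
      sq_nonneg (c-e), sq_nonneg (d+e)]
  have hD : f (w s) - f (w 0) = (a - b + c - d + e)/2 := by linarith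
  rw [hD]
  calc ((a - b + c - d + e)/2)^2 = (a - b + c - d + e)^2/4 := by ring
    _ ≤ 5*(a^2+b^2+c^2+d^2+e^2)/4 := by linarith
    _ = (5/4) * (a^2+b^2+c^2+d^2+e^2) := by ring

end MCMI

open MCMI in
theorem markov_chain_maximal_inequality
    (n : ℕ) (π : Fin n → ℝ) (A : Matrix (Fin n) (Fin n) ℝ)
    (hπ0 : ∀ i, 0 ≤ π i) (hπ1 : ∑ i, π i = 1)
    (hA0 : ∀ i j, 0 ≤ A i j) (hA1 : ∀ i, ∑ j, A i j = 1)
    (hstat : ∀ j, ∑ i, π i * A i j = π j)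
    (hrev : ∀ i j, π i * A i j = π j * A j i)
    (f : Fin n → ℝ) (t : ℕ) (ht : 0 < t) :
    ∑ z : Fin (t + 1) → Fin n,
        (π (z 0) * ∏ s : Fin t, A (z s.castSucc) (z s.succ)) *
          Finset.univ.sup' ⟨0, Finset.mem_univ 0⟩
            (fun s : Fin (t + 1) => (f (z s) - f (z 0)) ^ 2) ≤
      100 * t * ∑ i, ∑ j, π i * A i j * (f j - f i) ^ 2 := by
  have hne : (Finset.range (t+1)).Nonempty := ⟨0, by simp⟩
  set hmax : (ℕ → Fin n) → ℝ :=
    fun w => (Finset.range (t+1)).sup' hne (fun s => (f (w s) - f (w 0))^2) with hhmax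
  -- Step A : rewrite the LHS as `Ex π A t hmax`
  have hpad0 : ∀ z : Fin (t+1) → Fin n, pad z 0 = z 0 := by
    intro z; unfold pad; apply congrArg z; ext; simp
  have hpadval : ∀ (z : Fin (t+1) → Fin n) (u : ℕ) (hu : u ≤ t),
      pad z u = z ⟨u, by omega⟩ := by
    intro z u hu; unfold pad; apply congrArg z; ext; simp; omega
  have stepA : (∑ z : Fin (t + 1) → Fin n,
        (π (z 0) * ∏ s : Fin t, A (z s.castSucc) (z s.succ)) *
          Finset.univ.sup' ⟨0, Finset.mem_univ 0⟩
            (fun s : Fin (t + 1) => (f (z s) - f (z 0)) ^ 2))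
      = Ex π A t hmax := by
    rw [Ex]
    refine Finset.sum_congr rfl fun z _ => ?_
    have hW : W π A z = π (z 0) * ∏ s : Fin t, A (z s.castSucc) (z s.succ) := by
      unfold W
      rw [hpad0]
      congr 1
      rw [← Fin.prod_univ_eq_prod_range (fun u => A (pad z u) (pad z (u+1))) t]
      refine Finset.prod_congr rfl fun u _ => ?_
      have e1 : pad z u.val = z u.castSucc := by
        rw [hpadval z u.val (by omega)]
        apply congrArg z; ext; simp
      have e2 : pad z (u.val+1) = z u.succ := by
        rw [hpadval z (u.val+1) (by omega)]
        apply congrArg z; ext; simp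
      rw [e1, e2]
    have hsup : Finset.univ.sup' ⟨0, Finset.mem_univ 0⟩
          (fun s : Fin (t + 1) => (f (z s) - f (z 0)) ^ 2) = hmax (pad z) := by
      rw [hhmax]
      apply le_antisymm
      · refine Finset.sup'_le _ _ fun s _ => ?_
        have : (f (z s) - f (z 0))^2
            = (f (pad z s.val) - f (pad z 0))^2 := by
          rw [hpad0, hpadval z s.val (by omega)]
        rw [this]
        exact Finset.le_sup' (fun u => (f (pad z u) - f (pad z 0))^2)
          (by rw [mem_range]; omega : s.val ∈ Finset.range (t+1))
      · refine Finset.sup'_le _ _ fun u hu => ?_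
        rw [mem_range] at hu
        have : (f (pad z u) - f (pad z 0))^2
            = (f (z (⟨u, by omega⟩ : Fin (t+1))) - f (z 0))^2 := by
          rw [hpad0, hpadval z u (by omega)]
        rw [this]
        exact Finset.le_sup' (fun s : Fin (t+1) => (f (z s) - f (z 0))^2)
          (Finset.mem_univ (⟨u, by omega⟩ : Fin (t+1)))
    rw [hW, hsup]
  rw [stepA]
  -- Step B : pathwise domination of the max
  set h1 : (ℕ → Fin n) → ℝ := fun w => (xb A f w t)^2 with hh1
  set h2 : (ℕ → Fin n) → ℝ := fun w => (MM A f (fun v => w (t - v)) t)^2 with hh2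
  set h3 : (ℕ → Fin n) → ℝ := fun w => (xb A f (fun v => w (t - v)) t)^2 with hh3
  set h4 : (ℕ → Fin n) → ℝ := fun w => ∑ u ∈ Finset.range (t+1), (gg A f (w u))^2 with hh4
  set h5 : (ℕ → Fin n) → ℝ := fun w => (gg A f (w 0))^2 with hh5
  have hpath : ∀ w, hmax w ≤ (5/4) * (h1 w + (h2 w + (h3 w + (h4 w + h5 w)))) := by
    intro w
    refine Finset.sup'_le _ _ fun s hs => ?_
    rw [mem_range] at hs
    have hs' : s ≤ t := by omega
    refine le_trans (path_sq_bound A f w t hs') ?_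
    have b1 : (MM A f w s)^2 ≤ h1 w := MM_sq_le_xb_sq A f w hs'
    have b3 : (MM A f (fun v => w (t - v)) (t - s))^2 ≤ h3 w :=
      MM_sq_le_xb_sq A f _ (Nat.sub_le t s)
    have b4 : (gg A f (w s))^2 ≤ h4 w :=
      Finset.single_le_sum (fun u _ => sq_nonneg (gg A f (w u)))
        (by rw [mem_range]; omega)
    have e2 : h2 w = (MM A f (fun v => w (t - v)) t)^2 := rfl
    have e5 : h5 w = (gg A f (w 0))^2 := rfl
    linarith [b1, b3, b4, e2, e5]
  have hmono : Ex π A t hmax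
      ≤ Ex π A t (fun w => (5/4) * (h1 w + (h2 w + (h3 w + (h4 w + h5 w))))) :=
    Ex_mono π A hπ0 hA0 t hpath
  -- Step C : compute and bound the expectations
  have hC : Ex π A t (fun w => (5/4) * (h1 w + (h2 w + (h3 w + (h4 w + h5 w)))))
      = (5/4) * (Ex π A t h1 + (Ex π A t h2 + (Ex π A t h3
          + (Ex π A t h4 + Ex π A t h5)))) := by
    rw [Ex_smul, Ex_add, Ex_add, Ex_add, Ex_add]
  set E := E1 π A f with hE
  have hE0 : 0 ≤ E := E1_nonneg π A f hπ0 hA0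
  have bM : Ex π A t (fun w => (MM A f w t)^2) ≤ t * E :=
    EM_sq π A f hπ0 hA0 hA1 hstat t
  have b1 : Ex π A t h1 ≤ 4 * (t * E) :=
    le_trans (doob π A f hπ0 hA0 hA1 t)
      (by linarith)
  have b2 : Ex π A t h2 ≤ t * E := by
    rw [hh2, Ex_rev π A hrev t (fun w => (MM A f w t)^2)]
    exact bM
  have b3 : Ex π A t h3 ≤ 4 * (t * E) := by
    rw [hh3, Ex_rev π A hrev t (fun w => (xb A f w t)^2)]
    exact b1
  have b4 : Ex π A t h4 ≤ (t+1) * E := by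
    rw [hh4, Ex_sum]
    calc ∑ u ∈ Finset.range (t+1), Ex π A t (fun w => (gg A f (w u))^2)
        ≤ ∑ u ∈ Finset.range (t+1), E := by
          refine Finset.sum_le_sum fun u hu => ?_
          rw [mem_range] at hu
          exact Ex_gg_sq_le π A f hπ0 hA0 hA1 hstat (by omega)
      _ = (t+1) * E := by
          rw [Finset.sum_const, Finset.card_range, nsmul_eq_mul]
          push_cast; ring
  have b5 : Ex π A t h5 ≤ E :=
    Ex_gg_sq_le π A f hπ0 hA0 hA1 hstat (Nat.zero_le t)
  have ht1 : (1:ℝ) ≤ t := by exact_mod_cast ht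
  have hfin : (5/4) * (Ex π A t h1 + (Ex π A t h2 + (Ex π A t h3
        + (Ex π A t h4 + Ex π A t h5)))) ≤ 100 * t * E := by
    nlinarith [mul_nonneg hE0 (sub_nonneg.mpr ht1)]
  calc Ex π A t hmax ≤ _ := hmono
    _ = _ := hC
    _ ≤ 100 * t * E := hfin
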